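/- Let S ⊆ (0,∞) and let X be a finite ultrametric space with nonzero distances in S; set τ(X) = |cLO(X)|/|iso(X)|. Then there exists a finite ultrametric space Y with nonzero distances in S such that for every finite ultrametric space Z with nonzero distances in S there is a coloring χ of the isometric copies of X in Z with τ(X) colors with the property: for every isometric copy Ỹ of Y in Z, χ takes all τ(X) values on the copies of X contained in Ỹ. -/

import Mathlib

/-- A finite ultrametric space with all nonzero distances in `S`. -/
structure FinUltra (S : Set ℝ) where
  n : ℕ
  d : Fin n → Fin n → ℝ
  d_self : ∀ x, d x x = 0
  d_symm : ∀ x y, d x y = d y x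
  d_mem : ∀ x y, x ≠ y → d x y ∈ S
  ultra : ∀ x y z, d x z ≤ max (d x y) (d y z)

/-- `r` is a strict total order (irreflexive, transitive, trichotomous). -/
def IsSTO {X : Type*} (r : X → X → Prop) : Prop :=
  (∀ x, ¬ r x x) ∧ (∀ x y z, r x y → r y z → r x z) ∧ (∀ x y, r x y ∨ x = y ∨ r y x)

/-- `r` is a convex linear ordering with respect to the distance `d` : a strict total
order for which every closed metric ball is an interval (equivalently,
`r x y → r y z → d x y ≤ d x z ∧ d y z ≤ d x z`). -/
def IsConvexSTO {X : Type*} (d : X → X → ℝ) (r : X → X → Prop) : Prop :=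
  IsSTO r ∧ ∀ x y z, r x y → r y z → d x y ≤ d x z ∧ d y z ≤ d x z

/-- `A` is a copy of the ordered space `(X, rX)` inside `(Z, rZ)` : the image of an
isometric, order-preserving embedding. -/
def IsOrdCopy {S : Set ℝ} (X Z : FinUltra S) (rX : Fin X.n → Fin X.n → Prop)
    (rZ : Fin Z.n → Fin Z.n → Prop) (A : Set (Fin Z.n)) : Prop :=
  ∃ f : Fin X.n → Fin Z.n, Set.range f = A ∧
    (∀ a b, Z.d (f a) (f b) = X.d a b) ∧ (∀ a b, rX a b → rZ (f a) (f b))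

/-- `A` is an isometric copy of `X` inside `Z`. -/
def IsCopy {S : Set ℝ} (X Z : FinUltra S) (A : Set (Fin Z.n)) : Prop :=
  ∃ f : Fin X.n → Fin Z.n, Set.range f = A ∧ ∀ a b, Z.d (f a) (f b) = X.d a b

/-- The number τ(X) = |cLO(X)| / |iso(X)|. -/
noncomputable def tau (S : Set ℝ) (X : FinUltra S) : ℕ :=
  Nat.card {r : Fin X.n → Fin X.n → Prop // IsConvexSTO X.d r} /
    Nat.card {g : Fin X.n ≃ Fin X.n // ∀ a b, X.d (g a) (g b) = X.d a b}

/-- A strict total order containing another strict total order equals it. -/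
lemma sto_le_eq {X : Type*} {r r' : X → X → Prop} (hr : IsSTO r) (hr' : IsSTO r')
    (h : ∀ a b, r a b → r' a b) : ∀ a b, r' a b ↔ r a b := by
  intro a b
  refine ⟨fun hab => ?_, h a b⟩
  rcases hr.2.2 a b with h1 | rfl | h1
  · exact h1
  · exact absurd hab (hr'.1 a)
  · exact absurd (hr'.2.1 _ _ _ hab (h _ _ h1)) (hr'.1 a)

/-- Key "blocks" lemma: two balls of radius `t` that are disjoint cannot interleave
in a convex order. -/
lemma block_lemma {X : Type*} {d : X → X → ℝ} {r : X → X → Prop}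
    (hr : IsConvexSTO d r)
    (hsymm : ∀ x y, d x y = d y x)
    (hultra : ∀ x y z, d x z ≤ max (d x y) (d y z)) {t : ℝ} {u w u' w' : X}
    (huw : d u w < t) (hu'w' : d u' w' < t) (hsep : ¬ d u u' < t)
    (h1 : r u u') (h2 : r w' w) : False := by
  rcases hr.1.2.2 u w' with h3 | rfl | h3
  · -- u r w' r w, so d u w' ≤ d u w < t ; then d u u' ≤ max (d u w') (d w' u') < t
    have h4 := (hr.2 u w' w h3 h2).1
    have h5 : d u u' ≤ max (d u w') (d w' u') := hultra u w' u'
    have h6 : d w' u' < t := lt_of_le_of_lt (le_of_eq (hsymm w' u')) hu'w'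
    exact hsep (lt_of_le_of_lt h5 (max_lt (lt_of_le_of_lt h4 huw) h6))
  · exact hsep (lt_of_le_of_lt (le_of_eq (hsymm u u')) hu'w')
  · -- w' r u r u' : d u u' ≤ d w' u' < t
    have h4 := (hr.2 w' u u' h3 h1).2
    exact hsep (lt_of_le_of_lt h4 (lt_of_le_of_lt (le_of_eq (hsymm w' u')) hu'w'))

open Classical in
/-- Every finite ultrametric space (positive off-diagonal) carries a convex strict
total order. -/
lemma exists_convexSTO (n : ℕ) (d : Fin n → Fin n → ℝ)
    (hself : ∀ x, d x x = 0) (hsymm : ∀ x y, d x y = d y x)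
    (hpos : ∀ x y, x ≠ y → 0 < d x y)
    (hultra : ∀ x y z, d x z ≤ max (d x y) (d y z)) :
    ∃ r : Fin n → Fin n → Prop, IsConvexSTO d r := by
  classical
  have hnonneg : ∀ x y, 0 ≤ d x y := by
    intro x y
    by_cases h : x = y
    · subst h; rw [hself]
    · exact le_of_lt (hpos x y h)
  set bal : Fin n → ℝ → Finset (Fin n) := fun x t => Finset.univ.filter (fun z => d x z < t)
    with hbal
  have hmemx : ∀ x t, 0 < t → x ∈ bal x t := by
    intro x t ht; simp [hbal, hself x, ht]
  set mn : Fin n → ℝ → Fin n := fun x t =>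
    if h : (bal x t).Nonempty then (bal x t).min' h else x with hmn
  have hmnmem : ∀ x t, 0 < t → mn x t ∈ bal x t := by
    intro x t ht
    have hne : (bal x t).Nonempty := ⟨x, hmemx x t ht⟩
    simp only [hmn, dif_pos hne]
    exact (bal x t).min'_mem hne
  have hbeq : ∀ x y t, d x y < t → bal x t = bal y t := by
    intro x y t hxy
    ext z
    simp only [hbal, Finset.mem_filter, Finset.mem_univ, true_and]
    constructor
    · intro hz
      have h1 : d y z ≤ max (d y x) (d x z) := hultra y x z
      have h2 : d y x < t := by rw [← hsymm x y]; exact hxy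
      exact lt_of_le_of_lt h1 (max_lt h2 hz)
    · intro hz
      exact lt_of_le_of_lt (hultra x y z) (max_lt hxy hz)
  have hmneq : ∀ x y t, d x y < t → mn x t = mn y t := by
    intro x y t hxy
    have hb := hbeq x y t hxy
    have ht : 0 < t := lt_of_le_of_lt (hnonneg x y) hxy
    have h2 : (bal y t).Nonempty := ⟨y, hmemx y t ht⟩
    simp only [hmn, hb, dif_pos h2]
  have hmnne : ∀ x y, x ≠ y → mn x (d x y) ≠ mn y (d x y) := by
    intro x y hxy heq
    have ht : 0 < d x y := hpos x y hxy
    have h1 := hmnmem x (d x y) ht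
    have h2 := hmnmem y (d x y) ht
    rw [heq] at h1
    simp only [hbal, Finset.mem_filter, Finset.mem_univ, true_and] at h1 h2
    have h3 := hultra x (mn y (d x y)) y
    rw [hsymm (mn y (d x y)) y] at h3
    exact absurd (lt_of_le_of_lt h3 (max_lt h1 h2)) (lt_irrefl _)
  refine ⟨fun x y => x ≠ y ∧ mn x (d x y) < mn y (d x y), ?_⟩
  have main : ∀ x y z, (x ≠ y ∧ mn x (d x y) < mn y (d x y)) →
      (y ≠ z ∧ mn y (d y z) < mn z (d y z)) →
      ((x ≠ z ∧ mn x (d x z) < mn z (d x z)) ∧ d x y ≤ d x z ∧ d y z ≤ d x z) := by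
    intro x y z ⟨hxy, h1⟩ ⟨hyz, h2⟩
    have t1pos : 0 < d x y := hpos x y hxy
    have t2pos : 0 < d y z := hpos y z hyz
    rcases lt_trichotomy (d x y) (d y z) with hc | hc | hc
    · -- d x y < d y z, so d x z = d y z
      have h3 : d x z ≤ d y z := le_trans (hultra x y z) (max_le (le_of_lt hc) le_rfl)
      have h4 : d y z ≤ d x z := by
        have h5 : d y z ≤ max (d y x) (d x z) := hultra y x z
        rw [← hsymm x y] at h5
        rcases max_cases (d x y) (d x z) with ⟨he, _⟩ | ⟨he, _⟩
        · rw [he] at h5; exact absurd (lt_of_le_of_lt h5 hc) (lt_irrefl _)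
        · rw [he] at h5; exact h5
      have heq : d x z = d y z := le_antisymm h3 h4
      have hxz : x ≠ z := by
        intro h; subst h
        rw [hself] at heq
        exact (ne_of_gt t2pos) heq.symm
      have hm : mn x (d y z) = mn y (d y z) := hmneq x y (d y z) hc
      refine ⟨⟨hxz, ?_⟩, ?_, ?_⟩
      · rw [heq, hm]; exact h2
      · rw [heq]; exact le_of_lt hc
      · rw [heq]
    · -- d x y = d y z
      have hle : d x z ≤ d x y := by
        have := hultra x y z
        rw [← hc] at this
        simpa using this
      rw [← hc] at h2
      rcases lt_or_eq_of_le hle with hlt | heq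
      · exfalso
        have hm : mn x (d x y) = mn z (d x y) := hmneq x z (d x y) hlt
        rw [hm] at h1
        exact absurd (lt_trans h1 h2) (lt_irrefl _)
      · have hxz : x ≠ z := by
          intro h; subst h
          rw [hself] at heq
          exact (ne_of_gt t1pos) heq.symm
        refine ⟨⟨hxz, ?_⟩, le_of_eq heq.symm, ?_⟩
        · rw [heq]; exact lt_trans h1 h2
        · rw [← hc]; exact le_of_eq heq.symm
    · -- d y z < d x y, so d x z = d x y
      have h3 : d x z ≤ d x y := le_trans (hultra x y z) (max_le le_rfl (le_of_lt hc))
      have h4 : d x y ≤ d x z := by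
        have h5 : d x y ≤ max (d x z) (d z y) := hultra x z y
        rw [← hsymm y z] at h5
        rcases max_cases (d x z) (d y z) with ⟨he, _⟩ | ⟨he, _⟩
        · rw [he] at h5; exact h5
        · rw [he] at h5; exact absurd (lt_of_le_of_lt h5 hc) (lt_irrefl _)
      have heq : d x z = d x y := le_antisymm h3 h4
      have hxz : x ≠ z := by
        intro h; subst h
        rw [hself] at heq
        exact (ne_of_gt t1pos) heq.symm
      have hm : mn y (d x y) = mn z (d x y) := hmneq y z (d x y) hc
      refine ⟨⟨hxz, ?_⟩, le_of_eq heq.symm, ?_⟩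
      · rw [heq, ← hm]; exact h1
      · rw [heq]; exact le_of_lt hc
  refine ⟨⟨fun x h => h.1 rfl, fun x y z h1 h2 => (main x y z h1 h2).1, ?_⟩,
    fun x y z h1 h2 => (main x y z h1 h2).2⟩
  intro x y
  by_cases hxy : x = y
  · exact Or.inr (Or.inl hxy)
  rcases lt_trichotomy (mn x (d x y)) (mn y (d x y)) with h | h | h
  · exact Or.inl ⟨hxy, h⟩
  · exact absurd h (hmnne x y hxy)
  · refine Or.inr (Or.inr ⟨Ne.symm hxy, ?_⟩)
    rw [hsymm y x]; exact h

/-! ### The saturated space `Fin m → Fin N` with level metric -/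

def fdP (N m : ℕ) (u v : Fin m → Fin N) (i : ℕ) : Prop :=
  ∃ hi : i < m, u ⟨i, hi⟩ ≠ v ⟨i, hi⟩

lemma fd_ex {N m : ℕ} {u v : Fin m → Fin N} (h : u ≠ v) : ∃ i, fdP N m u v i := by
  rcases Function.ne_iff.mp h with ⟨a, ha⟩
  exact ⟨a.1, a.2, by simpa using ha⟩

open Classical in
noncomputable def fd {N m : ℕ} (u v : Fin m → Fin N) (h : u ≠ v) : ℕ :=
  Nat.find (fd_ex h)

open Classical in
lemma fd_lt {N m : ℕ} {u v : Fin m → Fin N} (h : u ≠ v) : fd u v h < m :=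
  (Nat.find_spec (fd_ex h)).1

open Classical in
lemma fd_spec {N m : ℕ} {u v : Fin m → Fin N} (h : u ≠ v) :
    u ⟨fd u v h, fd_lt h⟩ ≠ v ⟨fd u v h, fd_lt h⟩ :=
  (Nat.find_spec (fd_ex h)).2

open Classical in
lemma fd_le {N m : ℕ} {u v : Fin m → Fin N} (h : u ≠ v) {i : ℕ} (hi : fdP N m u v i) :
    fd u v h ≤ i := Nat.find_le hi

open Classical in
lemma fd_min {N m : ℕ} {u v : Fin m → Fin N} (h : u ≠ v) {j : ℕ} (hj : j < fd u v h) :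
    ¬ fdP N m u v j := Nat.find_min (fd_ex h) hj

lemma fd_symm {N m : ℕ} {u v : Fin m → Fin N} (h : u ≠ v) :
    fd u v h = fd v u (Ne.symm h) := by
  apply le_antisymm
  · exact fd_le h ⟨fd_lt (Ne.symm h), (fd_spec (Ne.symm h)).symm⟩
  · exact fd_le (Ne.symm h) ⟨fd_lt h, (fd_spec h).symm⟩

noncomputable def dW (N m : ℕ) (vals : ℕ → ℝ) (u v : Fin m → Fin N) : ℝ :=
  if h : u = v then 0 else vals (fd u v h)

lemma dW_self {N m : ℕ} (vals : ℕ → ℝ) (u : Fin m → Fin N) : dW N m vals u u = 0 :=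
  dif_pos rfl

lemma dW_symm {N m : ℕ} (vals : ℕ → ℝ) (u v : Fin m → Fin N) :
    dW N m vals u v = dW N m vals v u := by
  unfold dW
  by_cases h : u = v
  · rw [dif_pos h, dif_pos h.symm]
  · rw [dif_neg h, dif_neg (Ne.symm h), fd_symm h]

lemma dW_ne {N m : ℕ} (vals : ℕ → ℝ) {u v : Fin m → Fin N} (h : u ≠ v) :
    dW N m vals u v = vals (fd u v h) := dif_neg h

lemma dW_vals {N m : ℕ} (vals : ℕ → ℝ) {u v : Fin m → Fin N} (h : u ≠ v) :
    ∃ i, i < m ∧ dW N m vals u v = vals i :=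
  ⟨fd u v h, fd_lt h, dW_ne vals h⟩

lemma dW_pos {N m : ℕ} {vals : ℕ → ℝ} (hpos : ∀ i, i < m → 0 < vals i)
    {u v : Fin m → Fin N} (h : u ≠ v) : 0 < dW N m vals u v := by
  rw [dW_ne vals h]; exact hpos _ (fd_lt h)

lemma dW_nonneg {N m : ℕ} {vals : ℕ → ℝ} (hpos : ∀ i, i < m → 0 < vals i)
    (u v : Fin m → Fin N) : 0 ≤ dW N m vals u v := by
  by_cases h : u = v
  · rw [h, dW_self]
  · exact le_of_lt (dW_pos hpos h)

lemma vals_anti {m : ℕ} {vals : ℕ → ℝ} (hdec : ∀ i j, i < j → j < m → vals j < vals i)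
    {i j : ℕ} (hij : i ≤ j) (hj : j < m) : vals j ≤ vals i := by
  rcases lt_or_eq_of_le hij with h | h
  · exact le_of_lt (hdec i j h hj)
  · rw [h]

lemma dW_ultra {N m : ℕ} {vals : ℕ → ℝ} (hdec : ∀ i j, i < j → j < m → vals j < vals i)
    (hpos : ∀ i, i < m → 0 < vals i) (u v w : Fin m → Fin N) :
    dW N m vals u w ≤ max (dW N m vals u v) (dW N m vals v w) := by
  by_cases huw : u = w
  · rw [huw, dW_self]
    exact le_max_of_le_left (dW_nonneg hpos _ _)
  by_cases huv : u = v
  · rw [huv]; exact le_max_right _ _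
  by_cases hvw : v = w
  · rw [← hvw]; exact le_max_left _ _
  set i := fd u w huw with hi
  have hilt : i < m := fd_lt huw
  have hne := fd_spec huw
  rcases ne_or_eq (u ⟨i, hilt⟩) (v ⟨i, hilt⟩) with h | h
  · have hle : fd u v huv ≤ i := fd_le huv ⟨hilt, h⟩
    have : vals i ≤ vals (fd u v huv) := vals_anti hdec hle hilt
    rw [dW_ne vals huw, dW_ne vals huv]
    exact le_max_of_le_left this
  · have h2 : v ⟨i, hilt⟩ ≠ w ⟨i, hilt⟩ := by rw [← h]; exact hne
    have hle : fd v w hvw ≤ i := fd_le hvw ⟨hilt, h2⟩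
    have : vals i ≤ vals (fd v w hvw) := vals_anti hdec hle hilt
    rw [dW_ne vals huw, dW_ne vals hvw]
    exact le_max_of_le_right this

lemma fd_cons_ne {N m : ℕ} {a b : Fin N} {s t : Fin m → Fin N} (hab : a ≠ b)
    (h : (Fin.cons a s : Fin (m+1) → Fin N) ≠ Fin.cons b t) :
    fd (Fin.cons a s) (Fin.cons b t) h = 0 := by
  refine Nat.le_zero.mp (fd_le h ⟨Nat.succ_pos m, ?_⟩)
  simpa using hab

lemma dW_cons_ne {N m : ℕ} (vals : ℕ → ℝ) {a b : Fin N} {s t : Fin m → Fin N} (hab : a ≠ b) :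
    dW N (m + 1) vals (Fin.cons a s) (Fin.cons b t) = vals 0 := by
  have h : (Fin.cons a s : Fin (m+1) → Fin N) ≠ Fin.cons b t := by
    intro he
    exact hab (by simpa using congrFun he 0)
  rw [dW_ne vals h, fd_cons_ne hab h]

lemma fd_cons_same {N m : ℕ} {a : Fin N} {s t : Fin m → Fin N} (hst : s ≠ t)
    (h : (Fin.cons a s : Fin (m+1) → Fin N) ≠ Fin.cons a t) :
    fd (Fin.cons a s) (Fin.cons a t) h = fd s t hst + 1 := by
  have hP : ∀ i, fdP N (m+1) (Fin.cons a s) (Fin.cons a t) (i+1) ↔ fdP N m s t i := by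
    intro i
    constructor
    · rintro ⟨hi, hne⟩
      refine ⟨Nat.lt_of_succ_lt_succ hi, ?_⟩
      intro he; apply hne
      have : (⟨i+1, hi⟩ : Fin (m+1)) = Fin.succ ⟨i, Nat.lt_of_succ_lt_succ hi⟩ := rfl
      rw [this, Fin.cons_succ, Fin.cons_succ]
      exact he
    · rintro ⟨hi, hne⟩
      refine ⟨Nat.succ_lt_succ hi, ?_⟩
      have : (⟨i+1, Nat.succ_lt_succ hi⟩ : Fin (m+1)) = Fin.succ ⟨i, hi⟩ := rfl
      rw [this, Fin.cons_succ, Fin.cons_succ]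
      exact hne
  have h0 : ¬ fdP N (m+1) (Fin.cons a s) (Fin.cons a t) 0 := by
    rintro ⟨hi, hne⟩
    apply hne
    have : (⟨0, hi⟩ : Fin (m+1)) = 0 := rfl
    rw [this, Fin.cons_zero, Fin.cons_zero]
  apply le_antisymm
  · exact fd_le h ((hP _).mpr ⟨fd_lt hst, fd_spec hst⟩)
  · have hfdP : fdP N (m+1) (Fin.cons a s) (Fin.cons a t) (fd _ _ h) :=
      ⟨fd_lt h, fd_spec h⟩
    rcases Nat.exists_eq_succ_of_ne_zero (fun he => h0 (he ▸ hfdP)) with ⟨k, hk⟩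
    rw [hk] at hfdP
    have h1 : fdP N m s t k := (hP k).mp hfdP
    have h2 := fd_le hst h1
    omega

lemma dW_cons_same {N m : ℕ} (vals : ℕ → ℝ) (a : Fin N) (s t : Fin m → Fin N) :
    dW N (m + 1) vals (Fin.cons a s) (Fin.cons a t) = dW N m (fun i => vals (i+1)) s t := by
  by_cases hst : s = t
  · rw [hst, dW_self, dW_self]
  have h : (Fin.cons a s : Fin (m+1) → Fin N) ≠ Fin.cons a t := by
    intro he
    exact hst (funext fun i => by simpa using congrFun he i.succ)
  rw [dW_ne vals h, dW_ne _ hst, fd_cons_same hst h]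

/-! ### Generic facts about strict total orders on finite types -/

lemma isSTO_instances {A : Type*} (ra : A → A → Prop) (ha : IsSTO ra) :
    IsStrictTotalOrder A ra := by
  haveI : IsTrans A ra := ⟨ha.2.1⟩
  haveI : IsIrrefl A ra := ⟨ha.1⟩
  haveI : IsTrichotomous A ra := ⟨fun a b h1 h2 => by rcases ha.2.2 a b with h|h|h <;> tauto⟩
  haveI : IsStrictOrder A ra := { }
  exact { }

lemma sto_embed {A B : Type*} [Fintype A] [Fintype B] (ra : A → A → Prop) (rb : B → B → Prop)
    (ha : IsSTO ra) (hb : IsSTO rb) (hcard : Fintype.card A ≤ Fintype.card B) :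
    ∃ f : A → B, ∀ x y, ra x y → rb (f x) (f y) := by
  classical
  haveI := isSTO_instances ra ha
  haveI := isSTO_instances rb hb
  letI LA : LinearOrder A := linearOrderOfSTO ra
  letI LB : LinearOrder B := linearOrderOfSTO rb
  let eA := monoEquivOfFin A (k := Fintype.card A) rfl
  let eB := monoEquivOfFin B (k := Fintype.card B) rfl
  refine ⟨fun x => eB (Fin.castLE hcard (eA.symm x)), fun x y h => ?_⟩
  have h1 : eA.symm x < eA.symm y := eA.symm.strictMono h
  have h2 : Fin.castLE hcard (eA.symm x) < Fin.castLE hcard (eA.symm y) := h1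
  exact eB.strictMono h2

lemma sto_auto_id {A : Type*} [Finite A] (ra : A → A → Prop) (ha : IsSTO ra)
    (φ : A ≃ A) (hφ : ∀ x y, ra x y ↔ ra (φ x) (φ y)) : ∀ x, φ x = x := by
  classical
  haveI := isSTO_instances ra ha
  letI LA : LinearOrder A := linearOrderOfSTO ra
  have hm : StrictMono (φ : A → A) := fun x y h => (hφ x y).mp h
  let iso : A ≃o A := StrictMono.orderIsoOfSurjective (φ : A → A) hm φ.surjective
  have : iso = OrderIso.refl A := Subsingleton.elim _ _
  intro x
  have h2 : iso x = x := by rw [this]; rfl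
  exact h2

/-! ### The embedding lemma -/

lemma embed_lemma (N : ℕ) (hN : 0 < N) :
    ∀ (m : ℕ) (vals : ℕ → ℝ)
      (_hdec : ∀ i j, i < j → j < m → vals j < vals i)
      (_hpos : ∀ i, i < m → 0 < vals i)
      (α : Type) (_ : Fintype α) (_hcard : Fintype.card α ≤ N)
      (dX : α → α → ℝ)
      (_hself : ∀ x, dX x x = 0) (_hsymm : ∀ x y, dX x y = dX y x)
      (_hvals : ∀ x y, x ≠ y → ∃ i, i < m ∧ dX x y = vals i)
      (_hultra : ∀ x y z, dX x z ≤ max (dX x y) (dX y z))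
      (r : α → α → Prop) (_hr : IsConvexSTO dX r)
      (rw : (Fin m → Fin N) → (Fin m → Fin N) → Prop)
      (_hrw : IsConvexSTO (dW N m vals) rw),
      ∃ f : α → (Fin m → Fin N),
        (∀ a b, dW N m vals (f a) (f b) = dX a b) ∧ (∀ a b, r a b → rw (f a) (f b)) := by
  intro m
  induction m with
  | zero =>
    intro vals hdec hpos α hα hcard dX hself hsymm hvals hultra r hr rw hrw
    have hsub : ∀ x y : α, x = y := by
      intro x y
      by_contra h
      rcases hvals x y h with ⟨i, hi, _⟩
      omega
    refine ⟨fun _ => (fun i => i.elim0), fun a b => ?_, fun a b hab => ?_⟩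
    · rw [hsub a b, dW_self, hself]
    · exact absurd hab (by rw [hsub a b]; exact hr.1.1 b)
  | succ m IH =>
    intro vals hdec hpos α hα hcard dX hself hsymm hvals hultra r hr rw hrw
    classical
    have hv0 : 0 < vals 0 := hpos 0 (Nat.succ_pos m)
    have hdle : ∀ x y : α, dX x y ≤ vals 0 := by
      intro x y
      by_cases h : x = y
      · rw [h, hself]; exact le_of_lt hv0
      · rcases hvals x y h with ⟨i, hi, he⟩
        rw [he]
        exact vals_anti hdec (Nat.zero_le i) hi
    -- the equivalence relation "same ball of radius < vals 0"
    let st : Setoid α := ⟨fun x y => dX x y < vals 0,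
      ⟨fun x => by rw [hself]; exact hv0,
       fun {x y} h => by rw [← hsymm]; exact h,
       fun {x y z} h1 h2 => lt_of_le_of_lt (hultra x y z) (max_lt h1 h2)⟩⟩
    let Q := Quotient st
    letI : DecidableEq Q := Classical.decEq Q
    letI fQ : Fintype Q := Fintype.ofSurjective (Quotient.mk st)
      (fun q => Quotient.inductionOn q fun a => ⟨a, rfl⟩)
    have hcardQ : Fintype.card Q ≤ N :=
      le_trans (Fintype.card_le_of_surjective (Quotient.mk st)
        (fun q => Quotient.inductionOn q fun a => ⟨a, rfl⟩)) hcard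
    -- order on classes
    have hblock : ∀ a b c e : α, st.r a c → st.r b e → ¬ st.r a b → r a b →
        (¬ st.r c e ∧ r c e) := by
      intro a b c e hac hbe hab hrab
      have hce : ¬ st.r c e := by
        intro hce
        apply hab
        have h1 : dX a b ≤ max (dX a c) (dX c b) := hultra a c b
        have h2 : dX c b ≤ max (dX c e) (dX e b) := hultra c e b
        have h3 : dX e b < vals 0 := by rw [← hsymm]; exact hbe
        exact lt_of_le_of_lt h1 (max_lt hac (lt_of_le_of_lt h2 (max_lt hce h3)))
      refine ⟨hce, ?_⟩
      have hcne : c ≠ e := by rintro rfl; exact hce (st.refl c)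
      rcases hr.1.2.2 c e with h | h | h
      · exact h
      · exact absurd h hcne
      · exact absurd (block_lemma hr hsymm hultra hac hbe hab hrab h) id
    let rq : Q → Q → Prop := Quotient.lift₂ (fun x y => ¬ st.r x y ∧ r x y)
      (by
        intro a b c e hac hbe
        ext
        constructor
        · rintro ⟨h1, h2⟩; exact hblock a b c e hac hbe h1 h2
        · rintro ⟨h1, h2⟩; exact hblock c e a b (st.symm hac) (st.symm hbe) h1 h2)
    have hrq : IsSTO rq := by
      refine ⟨?_, ?_, ?_⟩
      · intro q
        induction q using Quotient.inductionOn with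
        | h a => rintro ⟨h1, _⟩; exact h1 (st.refl a)
      · intro q1 q2 q3
        induction q1 using Quotient.inductionOn with
        | h a =>
        induction q2 using Quotient.inductionOn with
        | h b =>
        induction q3 using Quotient.inductionOn with
        | h c =>
        rintro ⟨h1, h2⟩ ⟨h3, h4⟩
        refine ⟨?_, hr.1.2.1 a b c h2 h4⟩
        intro hac
        exact h1 (lt_of_le_of_lt (le_trans ((hr.2 a b c h2 h4).1) (le_of_eq rfl)) hac)
      · intro q1 q2
        induction q1 using Quotient.inductionOn with
        | h a =>
        induction q2 using Quotient.inductionOn with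
        | h b =>
        by_cases hab : st.r a b
        · exact Or.inr (Or.inl (Quotient.sound hab))
        · have hne : a ≠ b := by rintro rfl; exact hab (st.refl a)
          rcases hr.1.2.2 a b with h | h | h
          · exact Or.inl ⟨hab, h⟩
          · exact absurd h hne
          · exact Or.inr (Or.inr ⟨fun hba => hab (st.symm hba), h⟩)
    -- order on the N balls of the big space
    let z0 : Fin m → Fin N := fun _ => ⟨0, hN⟩
    let cz : Fin N → (Fin (m+1) → Fin N) := fun j => Fin.cons j z0
    have hcz0 : ∀ j, cz j 0 = j := fun j => rfl
    have hczne : ∀ j j', j ≠ j' → cz j ≠ cz j' := by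
      intro j j' hjj' he
      exact hjj' (by rw [← hcz0 j, ← hcz0 j', he])
    let rb : Fin N → Fin N → Prop := fun j j' => j ≠ j' ∧ rw (cz j) (cz j')
    have hrb : IsSTO rb := by
      refine ⟨fun j h => h.1 rfl, ?_, ?_⟩
      · rintro j1 j2 j3 ⟨h1, h2⟩ ⟨h3, h4⟩
        refine ⟨?_, hrw.1.2.1 _ _ _ h2 h4⟩
        rintro rfl
        exact hrw.1.1 _ (hrw.1.2.1 _ _ _ h2 h4)
      · intro j j'
        by_cases hjj' : j = j'
        · exact Or.inr (Or.inl hjj')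
        rcases hrw.1.2.2 (cz j) (cz j') with h | h | h
        · exact Or.inl ⟨hjj', h⟩
        · exact absurd h (hczne _ _ hjj')
        · exact Or.inr (Or.inr ⟨Ne.symm hjj', h⟩)
    -- membership of a point in the ball with first coordinate j
    have hinball : ∀ (j : Fin N) (u : Fin (m+1) → Fin N), u 0 = j →
        dW N (m+1) vals u (cz j) < vals 0 := by
      intro j u hu
      by_cases h : u = cz j
      · rw [h, dW_self]; exact hv0
      · rw [dW_ne vals h]
        have hlt := fd_lt h
        have hspec := fd_spec h
        have hne0 : fd u (cz j) h ≠ 0 := by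
          intro he
          apply hspec
          have h0 : (⟨fd u (cz j) h, hlt⟩ : Fin (m+1)) = 0 := by
            simp [he]
          rw [h0, hu, hcz0]
        exact hdec 0 _ (Nat.pos_of_ne_zero hne0) hlt
    have hsepball : ∀ (j j' : Fin N) (u u' : Fin (m+1) → Fin N), j ≠ j' →
        u 0 = j → u' 0 = j' → dW N (m+1) vals u u' = vals 0 := by
      intro j j' u u' hjj' hu hu'
      have hne : u ≠ u' := by
        intro he; apply hjj'; rw [← hu, ← hu', he]
      rw [dW_ne vals hne]
      congr 1
      refine Nat.le_zero.mp (fd_le hne ⟨Nat.succ_pos m, ?_⟩)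
      have h0 : (⟨0, Nat.succ_pos m⟩ : Fin (m+1)) = 0 := rfl
      rw [h0, hu, hu']
      exact hjj'
    have hblockcmp : ∀ (j j' : Fin N), rb j j' → ∀ u u', u 0 = j → u' 0 = j' → rw u u' := by
      intro j j' ⟨hjj', hczlt⟩ u u' hu hu'
      have hne : u ≠ u' := by
        intro he; apply hjj'; rw [← hu, ← hu', he]
      rcases hrw.1.2.2 u u' with h | h | h
      · exact h
      · exact absurd h hne
      · exfalso
        refine block_lemma hrw (dW_symm vals) (dW_ultra hdec hpos) (t := vals 0)
          ?_ ?_ ?_ hczlt h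
        · rw [dW_symm]; exact hinball j u hu
        · rw [dW_symm]; exact hinball j' u' hu'
        · rw [hsepball j j' (cz j) (cz j') hjj' (hcz0 j) (hcz0 j')]
          exact lt_irrefl _
    -- embed the classes into the balls, in an order preserving way
    obtain ⟨emb, hemb⟩ := sto_embed rq rb hrq hrb (le_trans hcardQ (le_of_eq (Fintype.card_fin N).symm))
    have hembinj : ∀ q q' : Q, q ≠ q' → emb q ≠ emb q' := by
      intro q q' hqq' he
      rcases hrq.2.2 q q' with h | h | h
      · exact (hemb _ _ h).1 he
      · exact hqq' h
      · exact (hemb _ _ h).1 he.symm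
    -- apply the induction hypothesis inside each class
    let vals' : ℕ → ℝ := fun i => vals (i + 1)
    have hdec' : ∀ i j, i < j → j < m → vals' j < vals' i := by
      intro i j hij hj; exact hdec (i+1) (j+1) (by omega) (by omega)
    have hpos' : ∀ i, i < m → 0 < vals' i := fun i hi => hpos (i+1) (by omega)
    have hIH : ∀ q : Q, ∃ g : {x : α // Quotient.mk st x = q} → (Fin m → Fin N),
        (∀ a b, dW N m vals' (g a) (g b) = dX a.1 b.1) ∧
        (∀ a b, r a.1 b.1 → rw (Fin.cons (emb q) (g a)) (Fin.cons (emb q) (g b))) := by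
      intro q
      refine IH vals' hdec' hpos' {x : α // Quotient.mk st x = q} inferInstance
        (le_trans (Fintype.card_subtype_le _) hcard)
        (fun x y => dX x.1 y.1) (fun x => hself x.1) (fun x y => hsymm x.1 y.1)
        ?_ (fun x y z => hultra x.1 y.1 z.1)
        (fun x y => r x.1 y.1) ?_
        (fun s t => rw (Fin.cons (emb q) s) (Fin.cons (emb q) t)) ?_
      · -- distances within a class avoid vals 0
        rintro ⟨x, hx⟩ ⟨y, hy⟩ hne
        have hxy : x ≠ y := fun h => hne (Subtype.ext h)
        have hst : st.r x y := Quotient.exact (hx.trans hy.symm)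
        rcases hvals x y hxy with ⟨i, hi, he⟩
        rcases Nat.eq_zero_or_pos i with rfl | hipos
        · have h' : dX x y < vals 0 := hst
          rw [he] at h'
          exact absurd h' (lt_irrefl _)
        · exact ⟨i - 1, by omega, by simp only [vals']; rw [Nat.sub_add_cancel hipos]; exact he⟩
      · -- restricted order is a convex STO
        refine ⟨⟨fun x => hr.1.1 x.1, fun x y z => hr.1.2.1 x.1 y.1 z.1, ?_⟩,
          fun x y z h1 h2 => hr.2 x.1 y.1 z.1 h1 h2⟩
        intro x y
        rcases hr.1.2.2 x.1 y.1 with h | h | h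
        · exact Or.inl h
        · exact Or.inr (Or.inl (Subtype.ext h))
        · exact Or.inr (Or.inr h)
      · -- the pulled-back order on the small space is a convex STO
        have hczinj : ∀ s t : Fin m → Fin N,
            (Fin.cons (emb q) s : Fin (m+1) → Fin N) = Fin.cons (emb q) t → s = t := by
          intro s t he
          funext i
          simpa using congrFun he i.succ
        refine ⟨⟨fun s h => hrw.1.1 _ h, fun s t u h1 h2 => hrw.1.2.1 _ _ _ h1 h2, ?_⟩, ?_⟩
        · intro s t
          rcases hrw.1.2.2 (Fin.cons (emb q) s) (Fin.cons (emb q) t) with h | h | h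
          · exact Or.inl h
          · exact Or.inr (Or.inl (hczinj s t h))
          · exact Or.inr (Or.inr h)
        · intro s t u h1 h2
          have := hrw.2 _ _ _ h1 h2
          rwa [dW_cons_same, dW_cons_same, dW_cons_same] at this
    choose g hgiso hgord using hIH
    have hgcast : ∀ (q : Q) (x : α) (hx : Quotient.mk st x = q),
        g (Quotient.mk st x) ⟨x, rfl⟩ = g q ⟨x, hx⟩ := by
      intro q x hx; subst hx; rfl
    -- assemble the embedding
    let F : α → (Fin (m+1) → Fin N) := fun x =>
      Fin.cons (emb (Quotient.mk st x)) (g (Quotient.mk st x) ⟨x, rfl⟩)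
    have hF0 : ∀ x, F x 0 = emb (Quotient.mk st x) := fun x => rfl
    refine ⟨F, ?_, ?_⟩
    · intro a b
      by_cases hq : Quotient.mk st a = Quotient.mk st b
      · have he1 : emb (Quotient.mk st b) = emb (Quotient.mk st a) := by rw [hq]
        have he2 : g (Quotient.mk st b) ⟨b, rfl⟩ = g (Quotient.mk st a) ⟨b, hq.symm⟩ :=
          hgcast _ b hq.symm
        have hFb : F b = Fin.cons (emb (Quotient.mk st a))
            (g (Quotient.mk st a) ⟨b, hq.symm⟩) := by
          show (Fin.cons (emb (Quotient.mk st b)) (g (Quotient.mk st b) ⟨b, rfl⟩) :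
            Fin (m+1) → Fin N) = _
          rw [he1, he2]
        rw [hFb]
        show dW N (m+1) vals (Fin.cons _ (g (Quotient.mk st a) ⟨a, rfl⟩)) _ = dX a b
        rw [dW_cons_same]
        exact hgiso (Quotient.mk st a) ⟨a, rfl⟩ ⟨b, hq.symm⟩
      · have hab : a ≠ b := by rintro rfl; exact hq rfl
        have hstab : ¬ st.r a b := fun h => hq (Quotient.sound h)
        have h1 : dW N (m+1) vals (F a) (F b) = vals 0 :=
          hsepball _ _ _ _ (hembinj _ _ hq) (hF0 a) (hF0 b)
        rw [h1]
        rcases hvals a b hab with ⟨i, hi, he⟩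
        rcases Nat.eq_zero_or_pos i with rfl | hipos
        · exact he.symm
        · exfalso
          have h2 : dX a b < vals 0 := by rw [he]; exact hdec 0 i hipos hi
          exact hstab h2
    · intro a b hab
      by_cases hq : Quotient.mk st a = Quotient.mk st b
      · have he1 : emb (Quotient.mk st b) = emb (Quotient.mk st a) := by rw [hq]
        have he2 : g (Quotient.mk st b) ⟨b, rfl⟩ = g (Quotient.mk st a) ⟨b, hq.symm⟩ :=
          hgcast _ b hq.symm
        have hFb : F b = Fin.cons (emb (Quotient.mk st a))
            (g (Quotient.mk st a) ⟨b, hq.symm⟩) := by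
          show (Fin.cons (emb (Quotient.mk st b)) (g (Quotient.mk st b) ⟨b, rfl⟩) :
            Fin (m+1) → Fin N) = _
          rw [he1, he2]
        rw [hFb]
        exact hgord (Quotient.mk st a) ⟨a, rfl⟩ ⟨b, hq.symm⟩ hab
      · have hstab : ¬ st.r a b := fun h => hq (Quotient.sound h)
        have hrqab : rq (Quotient.mk st a) (Quotient.mk st b) := ⟨hstab, hab⟩
        exact hblockcmp _ _ (hemb _ _ hrqab) (F a) (F b) (hF0 a) (hF0 b)

/-! ### Orbit counting -/

instance finiteProp' : Finite Prop := Finite.of_equiv Bool Equiv.propEquivBool.symm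

def orbSetoid (n : ℕ) (d : Fin n → Fin n → ℝ) :
    Setoid {r : Fin n → Fin n → Prop // IsConvexSTO d r} where
  r r1 r2 := ∃ g : {g : Fin n ≃ Fin n // ∀ a b, d (g a) (g b) = d a b},
    ∀ a b, r1.1 a b ↔ r2.1 (g.1 a) (g.1 b)
  iseqv := by
    refine ⟨fun r => ⟨⟨Equiv.refl _, fun a b => rfl⟩, fun a b => Iff.rfl⟩, ?_, ?_⟩
    · rintro r1 r2 ⟨g, hg⟩
      refine ⟨⟨g.1.symm, fun a b => ?_⟩, fun a b => ?_⟩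
      · have := g.2 (g.1.symm a) (g.1.symm b)
        simpa using this.symm
      · have := hg (g.1.symm a) (g.1.symm b)
        simpa using this.symm
    · rintro r1 r2 r3 ⟨g, hg⟩ ⟨g', hg'⟩
      refine ⟨⟨g.1.trans g'.1, fun a b => ?_⟩, fun a b => ?_⟩
      · simp only [Equiv.trans_apply]
        rw [g'.2, g.2]
      · simp only [Equiv.trans_apply]
        rw [hg a b, hg' (g.1 a) (g.1 b)]

/-- The isometry group acts freely on convex orderings, therefore the number of
convex orderings is the number of orbits times the size of the group. -/
lemma card_counting (n : ℕ) (d : Fin n → Fin n → ℝ) :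
    Nat.card {r : Fin n → Fin n → Prop // IsConvexSTO d r} =
    Nat.card (Quotient (orbSetoid n d)) *
      Nat.card {g : Fin n ≃ Fin n // ∀ a b, d (g a) (g b) = d a b} := by
  classical
  set C := {r : Fin n → Fin n → Prop // IsConvexSTO d r}
  set G := {g : Fin n ≃ Fin n // ∀ a b, d (g a) (g b) = d a b}
  -- pulling back a convex order by an isometry
  have pull_mem : ∀ (g : G) (r : C), IsConvexSTO d (fun a b => r.1 (g.1 a) (g.1 b)) := by
    rintro ⟨g, hg⟩ ⟨r, hr⟩
    refine ⟨⟨fun a => hr.1.1 (g a), fun a b c h1 h2 => hr.1.2.1 _ _ _ h1 h2, ?_⟩, ?_⟩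
    · intro a b
      rcases hr.1.2.2 (g a) (g b) with h | h | h
      · exact Or.inl h
      · exact Or.inr (Or.inl (g.injective h))
      · exact Or.inr (Or.inr h)
    · intro a b c h1 h2
      have := hr.2 (g a) (g b) (g c) h1 h2
      rwa [hg a b, hg a c, hg b c] at this
  let pull : G → C → C := fun g r => ⟨fun a b => r.1 (g.1 a) (g.1 b), pull_mem g r⟩
  have pull_rel : ∀ (g : G) (r : C), (orbSetoid n d).r (pull g r) r := by
    intro g r; exact ⟨g, fun a b => Iff.rfl⟩
  let Ψ : Quotient (orbSetoid n d) × G → C := fun p => pull p.2 p.1.out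
  have hinj : Function.Injective Ψ := by
    rintro ⟨q, g⟩ ⟨q', g'⟩ he
    have hq : q = q' := by
      have h1 : (orbSetoid n d).r (pull g q.out) q.out := pull_rel g q.out
      have h2 : (orbSetoid n d).r (pull g' q'.out) q'.out := pull_rel g' q'.out
      have h1' : (orbSetoid n d).r (Ψ (q, g)) q.out := h1
      rw [he] at h1'
      have h3 : (orbSetoid n d).r q.out q'.out :=
        (orbSetoid n d).trans ((orbSetoid n d).symm h1') h2
      calc q = ⟦q.out⟧ := q.out_eq.symm
        _ = ⟦q'.out⟧ := Quotient.sound h3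
        _ = q' := q'.out_eq
    subst hq
    -- freeness
    have hrel : ∀ a b, q.out.1 (g.1 a) (g.1 b) ↔ q.out.1 (g'.1 a) (g'.1 b) := by
      intro a b
      have := congrArg (fun r : C => r.1 a b) he
      simp only [Ψ, pull] at this
      rw [this]
    let φ : Fin n ≃ Fin n := g'.1.symm.trans g.1
    have hφ : ∀ x y, q.out.1 x y ↔ q.out.1 (φ x) (φ y) := by
      intro x y
      have := hrel (g'.1.symm x) (g'.1.symm y)
      simp only [Equiv.apply_symm_apply] at this
      exact this.symm
    have hid := sto_auto_id q.out.1 q.out.2.1 φ hφ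
    have hgg' : g.1 = g'.1 := by
      refine Equiv.ext fun a => ?_
      have := hid (g'.1 a)
      simpa [φ] using this
    rw [Prod.mk.injEq]
    exact ⟨rfl, Subtype.ext hgg'⟩
  have hsurj : Function.Surjective Ψ := by
    intro r
    obtain ⟨g, hg⟩ : (orbSetoid n d).r r (⟦r⟧ : Quotient (orbSetoid n d)).out := by
      have h0 : (⟦r⟧ : Quotient (orbSetoid n d)) = ⟦(⟦r⟧ : Quotient (orbSetoid n d)).out⟧ :=
        (Quotient.out_eq _).symm
      exact Quotient.exact h0
    refine ⟨⟨⟦r⟧, g⟩, ?_⟩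
    simp only [Ψ, pull]
    apply Subtype.ext
    funext a b
    exact propext (hg a b).symm
  have : Nat.card (Quotient (orbSetoid n d) × G) = Nat.card C :=
    Nat.card_eq_of_bijective Ψ ⟨hinj, hsurj⟩
  rw [← this, Nat.card_prod]

/-- There is `Y` such that in any `Z`, some coloring of the copies of `X` with τ(X)
colors takes all τ(X) values on the copies of `X` inside any copy of `Y`. -/
theorem tau_is_lower_bound_for_ramsey_degree
    (S : Set ℝ) (hSpos : ∀ s ∈ S, 0 < s) (X : FinUltra S) :
    ∃ Y : FinUltra S, ∀ Z : FinUltra S,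
      ∃ χ : Set (Fin Z.n) → Fin (tau S X),
        ∀ B : Set (Fin Z.n), IsCopy Y Z B →
          ∀ c : Fin (tau S X), ∃ A : Set (Fin Z.n), IsCopy X Z A ∧ A ⊆ B ∧ χ A = c := by
  classical
  -- basic facts about X
  have hXpos : ∀ x y : Fin X.n, x ≠ y → 0 < X.d x y :=
    fun x y h => hSpos _ (X.d_mem x y h)
  -- the set of distances of X
  set DS : Finset ℝ :=
    (Finset.univ.filter (fun p : Fin X.n × Fin X.n => p.1 ≠ p.2)).image
      (fun p => X.d p.1 p.2) with hDS
  have hDSmem : ∀ x ∈ DS, x ∈ S ∧ 0 < x := by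
    intro x hx
    simp only [hDS, Finset.mem_image, Finset.mem_filter, Finset.mem_univ, true_and] at hx
    rcases hx with ⟨p, hp, he⟩
    exact he ▸ ⟨X.d_mem p.1 p.2 hp, hXpos p.1 p.2 hp⟩
  set m : ℕ := DS.card with hm
  set iso : Fin m ≃o {x // x ∈ DS} := DS.orderIsoOfFin rfl with hiso
  set vals : ℕ → ℝ := fun i => if h : i < m then (iso ⟨m - 1 - i, by omega⟩ : ℝ) else 0
    with hvals
  have hvalsmem : ∀ i, i < m → vals i ∈ DS := by
    intro i hi
    simp only [hvals, dif_pos hi]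
    exact (iso ⟨m - 1 - i, by omega⟩).2
  have hpos : ∀ i, i < m → 0 < vals i := fun i hi => (hDSmem _ (hvalsmem i hi)).2
  have hdec : ∀ i j, i < j → j < m → vals j < vals i := by
    intro i j hij hj
    have hi : i < m := lt_trans hij hj
    simp only [hvals, dif_pos hi, dif_pos hj]
    have h1 : (⟨m - 1 - j, by omega⟩ : Fin m) < ⟨m - 1 - i, by omega⟩ := by
      simp only [Fin.mk_lt_mk]; omega
    exact iso.strictMono h1
  have hvals_sur : ∀ x y : Fin X.n, x ≠ y → ∃ i, i < m ∧ X.d x y = vals i := by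
    intro x y hxy
    have hmem : X.d x y ∈ DS := by
      simp only [hDS, Finset.mem_image, Finset.mem_filter, Finset.mem_univ, true_and]
      exact ⟨(x, y), hxy, rfl⟩
    obtain ⟨k, hk⟩ := iso.surjective ⟨X.d x y, hmem⟩
    refine ⟨m - 1 - k.1, by have := k.2; omega, ?_⟩
    have hlt : m - 1 - k.1 < m := by have := k.2; omega
    simp only [hvals, dif_pos hlt]
    have hkk : (⟨m - 1 - (m - 1 - k.1), by omega⟩ : Fin m) = k := by
      apply Fin.ext; simp only []; have := k.2; omega
    rw [hkk, hk]
  -- the saturated space Y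
  set N : ℕ := max X.n 1 with hN'
  have hN : 0 < N := lt_of_lt_of_le Nat.one_pos (le_max_right _ _)
  set e : (Fin m → Fin N) ≃ Fin (N ^ m) := finFunctionFinEquiv with he
  have hdWpos : ∀ u v : Fin m → Fin N, u ≠ v → 0 < dW N m vals u v :=
    fun u v h => dW_pos hpos h
  refine ⟨⟨N ^ m, fun p q => dW N m vals (e.symm p) (e.symm q),
    fun p => dW_self vals _, fun p q => dW_symm vals _ _, ?_,
    fun p q s => dW_ultra hdec hpos _ _ _⟩, ?_⟩
  · intro p q hpq
    have hne : e.symm p ≠ e.symm q := fun h => hpq (by rw [← e.apply_symm_apply p, h,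
      e.apply_symm_apply])
    obtain ⟨i, hi, hv⟩ := dW_vals vals hne
    show dW N m vals (e.symm p) (e.symm q) ∈ S
    rw [hv]
    exact (hDSmem _ (hvalsmem i hi)).1
  intro Z
  -- a convex order on Z
  obtain ⟨rZ, hrZ⟩ := exists_convexSTO Z.n Z.d Z.d_self Z.d_symm
    (fun x y h => hSpos _ (Z.d_mem x y h)) Z.ultra
  -- the quotient of convex orders on X by isometries
  haveI : Finite {r : Fin X.n → Fin X.n → Prop // IsConvexSTO X.d r} :=
    Subtype.finite
  haveI : Finite (Quotient (orbSetoid X.n X.d)) :=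
    Finite.of_surjective (Quotient.mk (orbSetoid X.n X.d))
      (fun q => Quotient.inductionOn q fun a => ⟨a, rfl⟩)
  have hGne : Nonempty {g : Fin X.n ≃ Fin X.n // ∀ a b, X.d (g a) (g b) = X.d a b} :=
    ⟨⟨Equiv.refl _, fun a b => rfl⟩⟩
  have hGpos : 0 < Nat.card {g : Fin X.n ≃ Fin X.n // ∀ a b, X.d (g a) (g b) = X.d a b} :=
    Nat.card_pos
  have htau : Nat.card (Quotient (orbSetoid X.n X.d)) = tau S X := by
    rw [tau, card_counting X.n X.d, Nat.mul_div_cancel _ hGpos]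
  let ψ : Quotient (orbSetoid X.n X.d) ≃ Fin (tau S X) := Finite.equivFinOfCardEq htau
  -- pullback of the convex order on Z along an isometric embedding of X
  have pb_mem : ∀ f : Fin X.n → Fin Z.n, (∀ a b, Z.d (f a) (f b) = X.d a b) →
      IsConvexSTO X.d (fun a b => rZ (f a) (f b)) := by
    intro f hf
    have hfinj : ∀ a b : Fin X.n, f a = f b → a = b := by
      intro a b hab
      by_contra hne
      have h1 : Z.d (f a) (f b) = 0 := by rw [hab, Z.d_self]
      rw [hf a b] at h1
      exact absurd h1 (ne_of_gt (hXpos a b hne))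
    refine ⟨⟨fun a => hrZ.1.1 (f a), fun a b c h1 h2 => hrZ.1.2.1 _ _ _ h1 h2, ?_⟩, ?_⟩
    · intro a b
      rcases hrZ.1.2.2 (f a) (f b) with h | h | h
      · exact Or.inl h
      · exact Or.inr (Or.inl (hfinj a b h))
      · exact Or.inr (Or.inr h)
    · intro a b c h1 h2
      have := hrZ.2 (f a) (f b) (f c) h1 h2
      rwa [hf a b, hf a c, hf b c] at this
  -- the coloring
  let cls : ∀ A : Set (Fin Z.n), IsCopy X Z A → Quotient (orbSetoid X.n X.d) := fun A h =>
    ⟦⟨fun a b => rZ (h.choose a) (h.choose b), pb_mem h.choose h.choose_spec.2⟩⟧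
  let χ : Set (Fin Z.n) → Fin (tau S X) := fun A =>
    if h : IsCopy X Z A then ψ (cls A h) else ψ ⟦(Classical.choice (by
      obtain ⟨r, hr⟩ := exists_convexSTO X.n X.d X.d_self X.d_symm hXpos X.ultra
      exact ⟨⟨r, hr⟩⟩ : Nonempty {r : Fin X.n → Fin X.n → Prop // IsConvexSTO X.d r}))⟧
  -- independence of the witness
  have hcls : ∀ (A : Set (Fin Z.n)) (h : IsCopy X Z A) (f : Fin X.n → Fin Z.n)
      (hfr : Set.range f = A) (hfi : ∀ a b, Z.d (f a) (f b) = X.d a b),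
      cls A h = ⟦⟨fun a b => rZ (f a) (f b), pb_mem f hfi⟩⟧ := by
    intro A h f hfr hfi
    obtain ⟨hf0r, hf0i⟩ := h.choose_spec
    set f0 := h.choose
    -- build the isometry relating the two parametrizations
    have hmem : ∀ a : Fin X.n, ∃ b : Fin X.n, f b = f0 a := by
      intro a
      have : f0 a ∈ A := hf0r ▸ Set.mem_range_self a
      rw [← hfr] at this
      exact this
    choose σ hσ using hmem
    have hf0inj : ∀ a b : Fin X.n, f0 a = f0 b → a = b := by
      intro a b hab
      by_contra hne
      have h1 : Z.d (f0 a) (f0 b) = 0 := by rw [hab, Z.d_self]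
      rw [hf0i a b] at h1
      exact absurd h1 (ne_of_gt (hXpos a b hne))
    have hσinj : Function.Injective σ := by
      intro a b hab
      apply hf0inj
      rw [← hσ a, ← hσ b, hab]
    have hσbij : Function.Bijective σ := (Finite.injective_iff_bijective).mp hσinj
    refine Quotient.sound ⟨⟨Equiv.ofBijective σ hσbij, ?_⟩, ?_⟩
    · intro a b
      show X.d (σ a) (σ b) = X.d a b
      rw [← hfi (σ a) (σ b), hσ a, hσ b, hf0i a b]
    · intro a b
      show rZ (f0 a) (f0 b) ↔ rZ (f (σ a)) (f (σ b))
      rw [hσ a, hσ b]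
  refine ⟨χ, ?_⟩
  rintro B ⟨gY, hgYr, hgYi⟩ c
  -- convex order on the saturated space pulled back from Z through the copy of Y
  have hgYinj : ∀ p q : Fin (N ^ m), gY p = gY q → p = q := by
    intro p q hpq
    by_contra hne
    have hsne : e.symm p ≠ e.symm q := fun h => hne (by rw [← e.apply_symm_apply p, h,
      e.apply_symm_apply])
    have h1 : Z.d (gY p) (gY q) = 0 := by rw [hpq, Z.d_self]
    rw [hgYi p q] at h1
    exact absurd h1 (ne_of_gt (hdWpos _ _ hsne))
  let rw' : (Fin m → Fin N) → (Fin m → Fin N) → Prop :=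
    fun s t => rZ (gY (e s)) (gY (e t))
  have hdist : ∀ s t : Fin m → Fin N, Z.d (gY (e s)) (gY (e t)) = dW N m vals s t := by
    intro s t
    rw [hgYi]
    show dW N m vals (e.symm (e s)) (e.symm (e t)) = dW N m vals s t
    rw [e.symm_apply_apply, e.symm_apply_apply]
  have hrw' : IsConvexSTO (dW N m vals) rw' := by
    refine ⟨⟨fun s => hrZ.1.1 _, fun s t u h1 h2 => hrZ.1.2.1 _ _ _ h1 h2, ?_⟩, ?_⟩
    · intro s t
      rcases hrZ.1.2.2 (gY (e s)) (gY (e t)) with h | h | h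
      · exact Or.inl h
      · exact Or.inr (Or.inl (e.injective (hgYinj _ _ h)))
      · exact Or.inr (Or.inr h)
    · intro s t u h1 h2
      have := hrZ.2 _ _ _ h1 h2
      rwa [hdist s t, hdist s u, hdist t u] at this
  -- the target orbit and its representative
  set q : Quotient (orbSetoid X.n X.d) := ψ.symm c with hq
  set r : {r : Fin X.n → Fin X.n → Prop // IsConvexSTO X.d r} := q.out with hr
  -- embed (X, r) into the ordered saturated space
  obtain ⟨f, hfiso, hford⟩ := embed_lemma N hN m vals hdec hpos (Fin X.n) inferInstance
    (by rw [Fintype.card_fin]; exact le_max_left _ _) X.d X.d_self X.d_symm hvals_sur X.ultra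
    r.1 r.2 rw' hrw'
  set w : Fin X.n → Fin Z.n := fun a => gY (e (f a)) with hw
  have hwiso : ∀ a b, Z.d (w a) (w b) = X.d a b := by
    intro a b
    rw [hw]
    show Z.d (gY (e (f a))) (gY (e (f b))) = X.d a b
    rw [hdist, hfiso]
  have hcopy : IsCopy X Z (Set.range w) := ⟨w, rfl, hwiso⟩
  refine ⟨Set.range w, hcopy, ?_, ?_⟩
  · rw [← hgYr]
    rintro z ⟨a, rfl⟩
    exact Set.mem_range_self _
  · -- the color is the right one
    have hpbw : (fun a b => rZ (w a) (w b)) = r.1 := by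
      funext a b
      apply propext
      have h1 : IsSTO (fun a b => rZ (w a) (w b)) := (pb_mem w hwiso).1
      exact sto_le_eq r.2.1 h1 (fun a b hab => hford a b hab) a b
    have : χ (Set.range w) = ψ (cls (Set.range w) hcopy) := dif_pos hcopy
    rw [this, hcls (Set.range w) hcopy w rfl hwiso]
    have hclseq : (⟦⟨fun a b => rZ (w a) (w b), pb_mem w hwiso⟩⟧ :
        Quotient (orbSetoid X.n X.d)) = q := by
      rw [show (⟨fun a b => rZ (w a) (w b), pb_mem w hwiso⟩ :
        {r : Fin X.n → Fin X.n → Prop // IsConvexSTO X.d r}) = r from Subtype.ext hpbw, hr]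
      exact Quotient.out_eq q
    rw [hclseq, hq, Equiv.apply_symm_apply]
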